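/- Let σ ∈ ℓ²(ℤ₊) be orthogonal to R^m ω for every m ≥ 0, where ω_n = λ^n/n! for some λ ∈ ℂ and R is the right shift. Then σ = 0. -/

import Mathlib

open scoped ComplexConjugate ENNReal

private lemma tsum_prod_eq_antidiag {F : ℕ × ℕ → ℂ} (h : Summable F) :
    ∑' p : ℕ × ℕ, F p = ∑' n : ℕ, ∑ kl ∈ Finset.HasAntidiagonal.antidiagonal n, F kl := by
  conv_rhs => congr; ext; rw [← Finset.sum_finset_coe, ← tsum_fintype (L := SummationFilter.unconditional _)]
  rw [← Finset.HasAntidiagonal.sigmaAntidiagonalEquivProd.tsum_eq F]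
  exact Summable.tsum_sigma' (fun n ↦ (hasSum_fintype _).summable)
    (Finset.HasAntidiagonal.sigmaAntidiagonalEquivProd.summable_iff.mpr h)

private lemma antidiag_sum (lam : ℂ) (n : ℕ) :
    ∑ kl ∈ Finset.HasAntidiagonal.antidiagonal n, ((-lam) ^ kl.1 / (Nat.factorial kl.1 : ℂ))
      * (lam ^ kl.2 / (Nat.factorial kl.2 : ℂ)) = (0 : ℂ) ^ n / (Nat.factorial n : ℂ) := by
  rw [Finset.Nat.sum_antidiagonal_eq_sum_range_succ_mk]
  have h0 : ((-lam) + lam) ^ n = (0 : ℂ) ^ n := by rw [neg_add_cancel]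
  rw [← h0, add_pow, Finset.sum_div]
  refine Finset.sum_congr rfl fun k hk => ?_
  have hk' : k ≤ n := Finset.mem_range_succ_iff.mp hk
  rw [Nat.cast_choose ℂ hk']
  have h1 : (Nat.factorial k : ℂ) ≠ 0 := Nat.cast_ne_zero.mpr (Nat.factorial_ne_zero k)
  have h2 : (Nat.factorial (n - k) : ℂ) ≠ 0 := Nat.cast_ne_zero.mpr (Nat.factorial_ne_zero _)
  have h3 : (Nat.factorial n : ℂ) ≠ 0 := Nat.cast_ne_zero.mpr (Nat.factorial_ne_zero n)
  field_simp

set_option maxHeartbeats 1000000 in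
/-- If σ ∈ ℓ²(ℤ₊) is orthogonal to every right shift Rᵐω of the sequence
ωₙ = λⁿ/n!, then σ = 0. -/
theorem stmt_9 (lam : ℂ) (σ ω : lp (fun _ : ℕ => ℂ) 2)
    (hω : ∀ n : ℕ, ω n = lam ^ n / (Nat.factorial n : ℂ))
    (horth : ∀ (m : ℕ) (x : lp (fun _ : ℕ => ℂ) 2),
      (∀ n : ℕ, x n = if n < m then 0 else ω (n - m)) → (inner ℂ σ x : ℂ) = 0) :
    σ = 0 := by
  classical
  set fx : ℕ → ℕ → ℂ := fun s n => if n < s then 0 else lam ^ (n - s) / (Nat.factorial (n - s) : ℂ)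
    with hfx
  have hinj : ∀ s : ℕ, Function.Injective (fun k : ℕ => k + s) := fun s a b h => by
    simpa using h
  have hfxshift : ∀ s k : ℕ, fx s (k + s) = lam ^ k / (Nat.factorial k : ℂ) := by
    intro s k
    simp only [hfx]
    rw [if_neg (by omega), Nat.add_sub_cancel]
  have hmem : ∀ s : ℕ, Memℓp (fx s) 2 := by
    intro s
    apply memℓp_gen
    have hsum : Summable fun k : ℕ => ‖(ω : ∀ _ : ℕ, ℂ) k‖ ^ (2 : ℝ≥0∞).toReal :=
      (lp.memℓp ω).summable (by norm_num)
    refine (Function.Injective.summable_iff (hinj s) ?_).mp ?_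
    · intro n hn
      have hns : n < s := by
        by_contra h
        exact hn ⟨n - s, by simp; omega⟩
      simp [hfx, if_pos hns]
    · refine hsum.congr fun k => ?_
      simp only [Function.comp]
      rw [hfxshift s k, hω k]
  -- the orthogonality relations, reindexed
  have hT : ∀ s : ℕ, ∑' k : ℕ, conj (σ (k + s)) * (lam ^ k / (Nat.factorial k : ℂ)) = 0 := by
    intro s
    have hx : ∀ n : ℕ, (⟨fx s, hmem s⟩ : lp (fun _ : ℕ => ℂ) 2) n
        = if n < s then 0 else ω (n - s) := by
      intro n
      by_cases h : n < s
      · simp [hfx, if_pos h]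
      · simp [hfx, if_neg h, hω (n - s)]
    have h0 := horth s ⟨fx s, hmem s⟩ hx
    rw [lp.inner_eq_tsum] at h0
    simp only [RCLike.inner_apply] at h0
    rw [← h0, tsum_congr fun i => mul_comm (fx s i) (conj (σ i))]
    have hsupp : Function.support (fun n => conj (σ n) * fx s n)
        ⊆ Set.range (fun k : ℕ => k + s) := by
      intro n hn
      rcases Nat.lt_or_ge n s with h | h
      · exact absurd (by simp [hfx, if_pos h]) hn
      · exact ⟨n - s, by simp; omega⟩
    rw [← Function.Injective.tsum_eq (hinj s) hsupp]
    exact tsum_congr fun k => by rw [hfxshift s k]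
  -- pointwise vanishing of σ
  have hzero : ∀ m : ℕ, σ m = 0 := by
    intro m
    set F : ℕ × ℕ → ℂ := fun p =>
      ((-lam) ^ p.1 / (Nat.factorial p.1 : ℂ)) *
        (conj (σ (p.2 + (m + p.1))) * (lam ^ p.2 / (Nat.factorial p.2 : ℂ))) with hF
    have hbound : Summable (fun p : ℕ × ℕ =>
        (‖σ‖ * (‖lam‖ ^ p.1 / (Nat.factorial p.1 : ℝ))) * (‖lam‖ ^ p.2 / (Nat.factorial p.2 : ℝ))) := by
      refine Summable.mul_of_nonneg ((Real.summable_pow_div_factorial ‖lam‖).mul_left ‖σ‖)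
        (Real.summable_pow_div_factorial ‖lam‖) (fun j => ?_) (fun k => ?_)
      · exact mul_nonneg (norm_nonneg _) (by positivity)
      · positivity
    have hFs : Summable F := by
      refine Summable.of_norm (Summable.of_nonneg_of_le (fun p => norm_nonneg _)
        (fun p => ?_) hbound)
      have h1 : ‖F p‖ = (‖lam‖ ^ p.1 / (Nat.factorial p.1 : ℝ)) *
          (‖σ (p.2 + (m + p.1))‖ * (‖lam‖ ^ p.2 / (Nat.factorial p.2 : ℝ))) := by
        simp [hF, norm_mul, norm_div, norm_pow]
      rw [h1]
      have h2 : ‖σ (p.2 + (m + p.1))‖ ≤ ‖σ‖ := lp.norm_apply_le_norm two_ne_zero σ _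
      have h3 : (0:ℝ) ≤ ‖lam‖ ^ p.1 / (Nat.factorial p.1 : ℝ) := by positivity
      have h4 : (0:ℝ) ≤ ‖lam‖ ^ p.2 / (Nat.factorial p.2 : ℝ) := by positivity
      calc (‖lam‖ ^ p.1 / (Nat.factorial p.1 : ℝ)) *
            (‖σ (p.2 + (m + p.1))‖ * (‖lam‖ ^ p.2 / (Nat.factorial p.2 : ℝ)))
          ≤ (‖lam‖ ^ p.1 / (Nat.factorial p.1 : ℝ)) * (‖σ‖ * (‖lam‖ ^ p.2 / (Nat.factorial p.2 : ℝ))) := by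
            gcongr
        _ = (‖σ‖ * (‖lam‖ ^ p.1 / (Nat.factorial p.1 : ℝ))) * (‖lam‖ ^ p.2 / (Nat.factorial p.2 : ℝ)) := by
            ring
    -- first evaluation: the double sum is zero
    have hA0 : ∑' p : ℕ × ℕ, F p = 0 := by
      rw [Summable.tsum_prod' hFs fun j => hFs.prod_factor j]
      have : ∀ j : ℕ, ∑' k : ℕ, F (j, k) = 0 := by
        intro j
        have : ∑' k : ℕ, F (j, k)
            = ((-lam) ^ j / (Nat.factorial j : ℂ)) *
              ∑' k : ℕ, conj (σ (k + (m + j))) * (lam ^ k / (Nat.factorial k : ℂ)) := by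
          rw [← tsum_mul_left]
        rw [this, hT (m + j), mul_zero]
      simp only [this, tsum_zero]
    -- second evaluation: the double sum is conj (σ m)
    have hA1 : ∑' p : ℕ × ℕ, F p = conj (σ m) := by
      rw [tsum_prod_eq_antidiag hFs]
      have hterm : ∀ n : ℕ, ∑ kl ∈ Finset.HasAntidiagonal.antidiagonal n, F kl
          = conj (σ (n + m)) * ((0:ℂ) ^ n / (Nat.factorial n : ℂ)) := by
        intro n
        rw [← antidiag_sum lam n, Finset.mul_sum]
        refine Finset.sum_congr rfl fun kl hkl => ?_
        have hkl' : kl.1 + kl.2 = n := Finset.HasAntidiagonal.mem_antidiagonal.mp hkl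
        have hidx : kl.2 + (m + kl.1) = n + m := by omega
        rw [hF]
        simp only [hidx]
        ring
      rw [tsum_congr hterm, tsum_eq_single 0 (fun n hn => by
        rw [zero_pow hn]; simp)]
      simp
    have := hA0 ▸ hA1
    have hc : conj (σ m) = 0 := this.symm
    simpa using congrArg conj hc
  ext n
  simp [hzero n]
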